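/- arXiv:1902.10004 — 7 statements merged into one kernel-verified Lean document; each statement's English description precedes it below -/
import Mathlib

section
/- If D is a strongly connected digraph of order n whose strong vertex-monochromatic connection number equals n, then the diameter of D is at most 2. -/
namespace SVMC

variable {V : Type*}

/-- `IsWalk A u v l` : `u :: l` is a directed walk from `u` to `v` in the digraph
with arc relation `A`; its length (number of arcs) is `l.length`. -/
def IsWalk (A : V → V → Prop) (u v : V) (l : List V) : Prop :=
  List.Chain A u l ∧ (u :: l).getLast (List.cons_ne_nil u l) = v

/-- A directed path: a walk with no repeated vertices. -/
def IsPath (A : V → V → Prop) (u v : V) (l : List V) : Prop :=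
  IsWalk A u v l ∧ (u :: l).Nodup

def Reachable (A : V → V → Prop) (u v : V) : Prop := ∃ l, IsWalk A u v l

/-- A digraph is strong if every vertex is reachable from every other vertex. -/
def Strong (A : V → V → Prop) : Prop := ∀ u v : V, Reachable A u v

/-- Directed distance: the minimum length of a directed walk from `u` to `v`. -/
noncomputable def dist (A : V → V → Prop) (u v : V) : ℕ :=
  sInf {n | ∃ l, IsWalk A u v l ∧ l.length = n}

/-- Diameter: maximum directed distance over ordered pairs of vertices. -/
noncomputable def diam (A : V → V → Prop) : ℕ :=
  sSup {d | ∃ u v : V, dist A u v = d}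

/-- The internal vertices of the walk `u :: l` (ending at the last entry of `l`)
are `l.dropLast`.  `MonoInternal Γ l` says they all receive one color. -/
def MonoInternal (Γ : V → ℕ) (l : List V) : Prop :=
  ∃ c, ∀ x ∈ l.dropLast, Γ x = c

/-- A strong vertex-monochromatic connection coloring. -/
def IsSVMC (A : V → V → Prop) (Γ : V → ℕ) : Prop :=
  ∀ u v : V, ∃ l, IsPath A u v l ∧ MonoInternal Γ l

/-- The number of colors used by a vertex coloring. -/
noncomputable def colorCount (Γ : V → ℕ) : ℕ := (Set.range Γ).ncard

/-- The strong vertex-monochromatic connection number. -/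
noncomputable def smcv (A : V → V → Prop) : ℕ :=
  sSup {k | ∃ Γ : V → ℕ, IsSVMC A Γ ∧ colorCount Γ = k}

def TotalAbsorbing (A : V → V → Prop) (S : Set V) : Prop := ∀ v : V, ∃ w ∈ S, A v w

def TotalDominating (A : V → V → Prop) (S : Set V) : Prop := ∀ v : V, ∃ w ∈ S, A w v

def Absorbing (A : V → V → Prop) (S : Set V) : Prop := ∀ v ∉ S, ∃ w ∈ S, A v w

def Dominating (A : V → V → Prop) (S : Set V) : Prop := ∀ v ∉ S, ∃ w ∈ S, A w v

/-- A walk all of whose vertices lie in `S`. -/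
def IsWalkIn (A : V → V → Prop) (S : Set V) (u v : V) (l : List V) : Prop :=
  IsWalk A u v l ∧ ∀ x ∈ u :: l, x ∈ S

/-- The subdigraph induced by `S` is strongly connected. -/
def StrongOn (A : V → V → Prop) (S : Set V) : Prop :=
  ∀ u ∈ S, ∀ v ∈ S, ∃ l, IsWalkIn A S u v l

/-- `Ω_v(D)`: minimum order of a strong, absorbing and dominating subdigraph. -/
noncomputable def Omegav (A : V → V → Prop) : ℕ :=
  sInf {k | ∃ S : Set V, S.Nonempty ∧ StrongOn A S ∧ Absorbing A S ∧
    Dominating A S ∧ S.ncard = k}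

/-- A directed cycle through `u` with vertex list `u :: l` (length `l.length`). -/
def IsCycle (A : V → V → Prop) (u : V) (l : List V) : Prop :=
  l ≠ [] ∧ IsWalk A u u l ∧ (u :: l.dropLast).Nodup

/-- The girth: minimum length of a directed cycle. -/
noncomputable def girth (A : V → V → Prop) : ℕ :=
  sInf {n | ∃ u l, IsCycle A u l ∧ l.length = n}

/-- The arcs of the walk `u :: l` are the consecutive pairs, i.e. `(u :: l).zip l`.
`MonoArcs` says they all get one color under the arc coloring `ΓA`. -/
def MonoArcs (ΓA : V → V → ℕ) (u : V) (l : List V) : Prop :=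
  ∃ c, ∀ p ∈ (u :: l).zip l, ΓA p.1 p.2 = c

/-- A strong monochromatic connection (arc) coloring. -/
def IsSMC (A : V → V → Prop) (ΓA : V → V → ℕ) : Prop :=
  ∀ u v : V, ∃ l, IsPath A u v l ∧ MonoArcs ΓA u l

/-- The number of colors used on the arcs. -/
noncomputable def arcColorCount (A : V → V → Prop) (ΓA : V → V → ℕ) : ℕ :=
  ((fun p : V × V => ΓA p.1 p.2) '' {p : V × V | A p.1 p.2}).ncard

/-- The strong monochromatic connection number (arc version). -/
noncomputable def smc (A : V → V → Prop) : ℕ :=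
  sSup {k | ∃ ΓA : V → V → ℕ, IsSMC A ΓA ∧ arcColorCount A ΓA = k}

/-- The number of arcs of a digraph. -/
noncomputable def arcCount (A : V → V → Prop) : ℕ := {p : V × V | A p.1 p.2}.ncard

/-- `Ω(D)`: minimum number of arcs of a strong spanning subdigraph. -/
noncomputable def Omega (A : V → V → Prop) : ℕ :=
  sInf {k | ∃ B : V → V → Prop, (∀ u v, B u v → A u v) ∧ Strong B ∧ arcCount B = k}

/-- The arcs of `A`, as the vertex type of the line digraph. -/
def Arc (A : V → V → Prop) : Type _ := {p : V × V // A p.1 p.2}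

/-- Adjacency in the line digraph: head of `e` equals tail of `f`. -/
def lineAdj (A : V → V → Prop) : Arc A → Arc A → Prop :=
  fun e f => e.1.2 = f.1.1

/-- `(u,v)` is a bad pair: `N⁺(u) = {v}` and `N⁻(v) = {u}`. -/
def BadPair (A : V → V → Prop) (u v : V) : Prop :=
  {w | A u w} = {v} ∧ {w | A w v} = {u}

/-- A tournament: an orientation of a complete graph. -/
def IsTournament (A : V → V → Prop) : Prop :=
  (∀ v, ¬ A v v) ∧ ∀ u v : V, u ≠ v → (A u v ↔ ¬ A v u)

/-- The directed 3-cycle on `Fin 3`. -/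
def C3Adj : Fin 3 → Fin 3 → Prop := fun i j => j = i + 1

/-- `A` is isomorphic to the directed 3-cycle. -/
def IsoC3 (A : V → V → Prop) : Prop :=
  ∃ e : V ≃ Fin 3, ∀ u v : V, A u v ↔ C3Adj (e u) (e v)

end SVMC
/-- if a strong digraph of order `n` has `smc_v(D) = n`, then its
diameter is at most 2. -/
theorem diam_le_two_of_smcv_eq_card {V : Type*} [Fintype V] (A : V → V → Prop)
    (hstrong : SVMC.Strong A) (h : SVMC.smcv A = Fintype.card V) :
    SVMC.diam A ≤ 2 := by
  set S := {k | ∃ Γ : V → ℕ, SVMC.IsSVMC A Γ ∧ SVMC.colorCount Γ = k} with hS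
  have hbdd : BddAbove S := by
    refine ⟨Fintype.card V, fun k hk => ?_⟩
    obtain ⟨Γ, _, hc⟩ := hk
    rw [← hc]
    have : Set.range Γ = Γ '' Set.univ := (Set.image_univ).symm
    calc SVMC.colorCount Γ = (Γ '' Set.univ).ncard := by rw [SVMC.colorCount, this]
    _ ≤ (Set.univ : Set V).ncard := Set.ncard_image_le Set.finite_univ
    _ = Fintype.card V := by rw [Set.ncard_univ, Nat.card_eq_fintype_card]
  rcases S.eq_empty_or_nonempty with hSe | hSne
  · -- smcv = 0, so card V = 0, V empty
    have hcard : Fintype.card V = 0 := by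
      rw [← h, SVMC.smcv, ← hS, hSe, csSup_empty]; rfl
    have : IsEmpty V := Fintype.card_eq_zero_iff.mp hcard
    have : {d | ∃ u v : V, SVMC.dist A u v = d} = ∅ := by
      ext d; simp [this.false]
    rw [SVMC.diam, this, csSup_empty]
    simp
  · have hmem : Fintype.card V ∈ S := by
      rw [← h, SVMC.smcv, ← hS]
      exact Nat.sSup_mem hSne hbdd
    obtain ⟨Γ, hsvmc, hc⟩ := hmem
    -- Γ is injective
    have hinj : Function.Injective Γ := by
      have h1 : (Γ '' Set.univ).ncard = (Set.univ : Set V).ncard := by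
        rw [Set.image_univ, Set.ncard_univ, Nat.card_eq_fintype_card, ← hc]; rfl
      have := Set.injOn_of_ncard_image_eq h1 Set.finite_univ
      exact fun a b hab => this (Set.mem_univ a) (Set.mem_univ b) hab
    -- every distance ≤ 2
    have hdist : ∀ u v : V, SVMC.dist A u v ≤ 2 := by
      intro u v
      obtain ⟨l, ⟨hw, hnd⟩, c, hmono⟩ := hsvmc u v
      have hlen : l.length ≤ 2 := by
        rcases hl : l.dropLast with _ | ⟨a, t⟩
        · have := l.length_dropLast
          rw [hl] at this
          simp at this
          omega
        · rcases ht : t with _ | ⟨b, t'⟩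
          · have := l.length_dropLast
            rw [hl, ht] at this
            simp at this
            omega
          · exfalso
            rw [ht] at hl
            have ha : a ∈ l.dropLast := by rw [hl]; simp
            have hb : b ∈ l.dropLast := by rw [hl]; simp
            have hab : a = b := hinj ((hmono a ha).trans (hmono b hb).symm)
            have hsub : l.dropLast.Sublist l := List.dropLast_sublist l
            have : l.Nodup := (List.nodup_cons.mp hnd).2
            have : l.dropLast.Nodup := hsub.nodup this
            rw [hl] at this
            simp [hab] at this
      have : SVMC.dist A u v ≤ l.length := Nat.sInf_le ⟨l, hw, rfl⟩
      omega
    rw [SVMC.diam]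
    rcases isEmpty_or_nonempty V with hV | hV
    · have : {d | ∃ u v : V, SVMC.dist A u v = d} = ∅ := by
        ext d; simp [hV.false]
      rw [this, csSup_empty]; simp
    · refine csSup_le ?_ ?_
      · obtain ⟨v⟩ := hV; exact ⟨_, v, v, rfl⟩
      · rintro d ⟨u, v, rfl⟩; exact hdist u v
end

section
/- Let D be a strongly connected digraph of order n with diameter d ≥ 3. Then smc_v(D) ≤ n − d + 2. -/
/-- a strong digraph of order `n` with diameter `d ≥ 3` satisfies
`smc_v(D) ≤ n - d + 2`. -/
theorem smcv_le_of_diam_ge_three {V : Type*} [Fintype V] (A : V → V → Prop) (d : ℕ)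
    (hstrong : SVMC.Strong A) (hd : SVMC.diam A = d) (h3 : 3 ≤ d) :
    SVMC.smcv A ≤ Fintype.card V - d + 2 := by
  classical
  have hne : Nonempty V := by
    by_contra h
    rw [not_nonempty_iff] at h
    have hempty : {k | ∃ u v : V, SVMC.dist A u v = k} = ∅ := by
      ext k; simp only [Set.mem_setOf_eq, Set.mem_empty_iff_false, iff_false]
      rintro ⟨u, -⟩; exact h.elim u
    rw [SVMC.diam, hempty, csSup_empty] at hd
    simp only [Nat.bot_eq_zero] at hd
    omega
  obtain ⟨u, v, huv⟩ : ∃ u v, SVMC.dist A u v = d := by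
    have heq : {k | ∃ u v : V, SVMC.dist A u v = k}
        = Set.range (fun p : V × V => SVMC.dist A p.1 p.2) := by
      ext k
      constructor
      · rintro ⟨u, v, h⟩; exact ⟨(u, v), h⟩
      · rintro ⟨⟨u, v⟩, h⟩; exact ⟨u, v, h⟩
    have hfin : {k | ∃ u v : V, SVMC.dist A u v = k}.Finite := by
      rw [heq]; exact Set.finite_range _
    have hnon : {k | ∃ u v : V, SVMC.dist A u v = k}.Nonempty := by
      obtain ⟨x⟩ := hne
      exact ⟨_, x, x, rfl⟩
    have hmem := Nat.sSup_mem hnon hfin.bddAbove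
    rw [SVMC.diam] at hd
    rw [hd] at hmem
    exact hmem
  -- every SVMC coloring uses at most n - d + 2 colors
  have key : ∀ k ∈ {k | ∃ Γ : V → ℕ, SVMC.IsSVMC A Γ ∧ SVMC.colorCount Γ = k},
      k ≤ Fintype.card V - d + 2 := by
    rintro k ⟨Γ, hΓ, rfl⟩
    obtain ⟨l, hpath, c, hc⟩ := hΓ u v
    -- length of l is at least d
    have hlen : d ≤ l.length := by
      rw [← huv]
      exact Nat.sInf_le ⟨l, hpath.1, rfl⟩
    -- internal vertices
    set S : Set V := {x | x ∈ l.dropLast} with hS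
    have hnodupl : l.Nodup := (List.nodup_cons.mp hpath.2).2
    have hnodup : l.dropLast.Nodup := hnodupl.sublist (List.dropLast_sublist l)
    have hScard : S.ncard = l.length - 1 := by
      have : S = ↑l.dropLast.toFinset := by
        ext x; simp [hS]
      rw [this, Set.ncard_coe_finset, List.toFinset_card_of_nodup hnodup,
        List.length_dropLast]
    have hSbig : d - 1 ≤ S.ncard := by omega
    -- range Γ is contained in image of complement plus {c}
    have hsub : Set.range Γ ⊆ (Γ '' Sᶜ) ∪ {c} := by
      rintro y ⟨x, rfl⟩
      by_cases hx : x ∈ S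
      · right; exact hc x hx
      · left; exact ⟨x, hx, rfl⟩
    have h1 : (Set.range Γ).ncard ≤ (Γ '' Sᶜ).ncard + 1 := by
      calc (Set.range Γ).ncard ≤ ((Γ '' Sᶜ) ∪ {c}).ncard :=
            Set.ncard_le_ncard hsub ((Sᶜ.toFinite.image Γ).union (Set.finite_singleton c))
        _ ≤ (Γ '' Sᶜ).ncard + ({c} : Set ℕ).ncard := Set.ncard_union_le _ _
        _ = (Γ '' Sᶜ).ncard + 1 := by rw [Set.ncard_singleton]
    have h2 : (Γ '' Sᶜ).ncard ≤ Sᶜ.ncard := Set.ncard_image_le Sᶜ.toFinite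
    have h3' : S.ncard + Sᶜ.ncard = Fintype.card V := by
      rw [Set.ncard_add_ncard_compl]
      exact Nat.card_eq_fintype_card
    rw [SVMC.colorCount]
    omega
  rcases Set.eq_empty_or_nonempty
      {k | ∃ Γ : V → ℕ, SVMC.IsSVMC A Γ ∧ SVMC.colorCount Γ = k} with he | hn
  · rw [SVMC.smcv, he, csSup_empty]
    exact Nat.zero_le _
  · exact csSup_le hn key
end

section
/- Let D be the digraph on vertices v_1,…,v_n (n ≥ 4) with arcs v_i→v_1 and v_2→v_i for all i ∈ {3,…,n}, together with the arc v_1→v_2. Then D is strong, has diameter 3, and smc_v(D) = n − 1 = n − diam(D) + 2. -/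
namespace SVMCAux
open SVMC

variable {n : ℕ}

section
variable (A : Fin n → Fin n → Prop)
  (hA : ∀ i j : Fin n, A i j ↔
      (((j : ℕ) = 0 ∧ 2 ≤ (i : ℕ)) ∨ ((i : ℕ) = 1 ∧ 2 ≤ (j : ℕ)) ∨
        ((i : ℕ) = 0 ∧ (j : ℕ) = 1)))

include hA

lemma arc_from_big {u w : Fin n} (hu : 2 ≤ (u : ℕ)) (h : A u w) : (w : ℕ) = 0 := by
  rcases (hA u w).1 h with ⟨h1, h2⟩ | ⟨h1, h2⟩ | ⟨h1, h2⟩ <;> omega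

lemma arc_from_zero {u w : Fin n} (hu : (u : ℕ) = 0) (h : A u w) : (w : ℕ) = 1 := by
  rcases (hA u w).1 h with ⟨h1, h2⟩ | ⟨h1, h2⟩ | ⟨h1, h2⟩ <;> omega

/-- canonical short path with internal vertices among indices 0,1 (or a single one). -/
lemma main_path (hn : 4 ≤ n) (u v : Fin n) :
    ∃ l, SVMC.IsPath A u v l ∧ l.length ≤ 3 ∧
      ∀ Γ : Fin n → ℕ, Γ ⟨0, by omega⟩ = Γ ⟨1, by omega⟩ → SVMC.MonoInternal Γ l := by
  set z : Fin n := ⟨0, by omega⟩ with hz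
  set o : Fin n := ⟨1, by omega⟩ with ho
  set t : Fin n := ⟨2, by omega⟩ with ht
  by_cases huv : u = v
  · exact ⟨[], ⟨⟨List.Chain.nil, huv⟩, by simp⟩, by simp, fun Γ _ => ⟨0, by simp⟩⟩
  have huv' : (u : ℕ) ≠ (v : ℕ) := fun h => huv (Fin.ext h)
  rcases Nat.lt_or_ge (u : ℕ) 2 with hu | hu
  · interval_cases hu' : (u : ℕ)
    · -- u = 0
      rcases Nat.lt_or_ge (v : ℕ) 2 with hv | hv
      · interval_cases hv' : (v : ℕ)
        · omega
        · -- 0 → 1 directly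
          refine ⟨[v], ⟨⟨?_, by simp⟩, by simp [huv]⟩, by simp, fun Γ _ => ⟨0, by simp⟩⟩
          simp [List.Chain, List.chain_cons, (hA u v).2 (Or.inr (Or.inr ⟨hu', hv'⟩))]
      · -- 0 → 1 → v
        refine ⟨[o, v], ⟨⟨?_, by simp⟩, ?_⟩, by simp, fun Γ _ => ⟨Γ o, by simp⟩⟩
        · simp only [List.Chain, List.isChain_cons_cons, List.isChain_singleton, and_true]
          exact ⟨(hA u o).2 (Or.inr (Or.inr ⟨hu', rfl⟩)),
            (hA o v).2 (Or.inr (Or.inl ⟨rfl, hv⟩))⟩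
        · simp [Fin.ext_iff, ho] at *
          omega
    · -- u = 1
      rcases Nat.lt_or_ge (v : ℕ) 2 with hv | hv
      · interval_cases hv' : (v : ℕ)
        · -- 1 → 2 → 0
          refine ⟨[t, v], ⟨⟨?_, by simp⟩, ?_⟩, by simp, fun Γ _ => ⟨Γ t, by simp⟩⟩
          · simp only [List.Chain, List.isChain_cons_cons, List.isChain_singleton, and_true]
            exact ⟨(hA u t).2 (Or.inr (Or.inl ⟨hu', by simp [ht]⟩)),
              (hA t v).2 (Or.inl ⟨hv', by simp [ht]⟩)⟩
          · simp [Fin.ext_iff, ht] at *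
            omega
        · omega
      · -- 1 → v
        refine ⟨[v], ⟨⟨?_, by simp⟩, by simp [huv]⟩, by simp, fun Γ _ => ⟨0, by simp⟩⟩
        simp [List.Chain, List.chain_cons, (hA u v).2 (Or.inr (Or.inl ⟨hu', hv⟩))]
  · -- u ≥ 2
    rcases Nat.lt_or_ge (v : ℕ) 2 with hv | hv
    · interval_cases hv' : (v : ℕ)
      · -- u → 0
        refine ⟨[v], ⟨⟨?_, by simp⟩, by simp [huv]⟩, by simp, fun Γ _ => ⟨0, by simp⟩⟩
        simp [List.Chain, List.chain_cons, (hA u v).2 (Or.inl ⟨hv', hu⟩)]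
      · -- u → 0 → 1
        refine ⟨[z, v], ⟨⟨?_, by simp⟩, ?_⟩, by simp, fun Γ _ => ⟨Γ z, by simp⟩⟩
        · simp only [List.Chain, List.isChain_cons_cons, List.isChain_singleton, and_true]
          exact ⟨(hA u z).2 (Or.inl ⟨rfl, hu⟩),
            (hA z v).2 (Or.inr (Or.inr ⟨rfl, hv'⟩))⟩
        · simp [Fin.ext_iff, hz] at *
          omega
    · -- u → 0 → 1 → v
      refine ⟨[z, o, v], ⟨⟨?_, by simp⟩, ?_⟩, by simp, fun Γ hΓ => ⟨Γ z, ?_⟩⟩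
      · simp only [List.Chain, List.isChain_cons_cons, List.isChain_singleton, and_true]
        exact ⟨(hA u z).2 (Or.inl ⟨rfl, hu⟩),
          (hA z o).2 (Or.inr (Or.inr ⟨rfl, rfl⟩)),
          (hA o v).2 (Or.inr (Or.inl ⟨rfl, hv⟩))⟩
      · simp [Fin.ext_iff, hz, ho] at *
        omega
      · intro x hx
        simp [List.dropLast] at hx
        rcases hx with h | h <;> simp [h, hΓ, hz, ho]
        exact hΓ.symm

/-- structure of any walk between two "big" distinct vertices -/
lemma walk_struct (u v : Fin n) (hu : 2 ≤ (u : ℕ)) (hv : 2 ≤ (v : ℕ)) (huv : u ≠ v)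
    (l : List (Fin n)) (hw : SVMC.IsWalk A u v l) :
    ∃ a b r, l = a :: b :: r ∧ r ≠ [] ∧ (a : ℕ) = 0 ∧ (b : ℕ) = 1 := by
  obtain ⟨hc, hlast⟩ := hw
  match l with
  | [] => simp at hlast; exact absurd hlast huv
  | [a] =>
      simp [List.getLast] at hlast
      rcases List.chain_cons.1 hc with ⟨h1, -⟩
      have := arc_from_big A hA hu h1
      subst hlast; omega
  | [a, b] =>
      simp [List.getLast] at hlast
      rcases List.chain_cons.1 hc with ⟨h1, hc2⟩
      rcases List.chain_cons.1 hc2 with ⟨h2, -⟩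
      have ha := arc_from_big A hA hu h1
      have hb := arc_from_zero A hA ha h2
      subst hlast; omega
  | a :: b :: c :: r =>
      rcases List.chain_cons.1 hc with ⟨h1, hc2⟩
      rcases List.chain_cons.1 hc2 with ⟨h2, -⟩
      exact ⟨a, b, c :: r, rfl, by simp,
        arc_from_big A hA hu h1, arc_from_zero A hA (arc_from_big A hA hu h1) h2⟩

end
end SVMCAux
set_option maxHeartbeats 1000000 in
/-- the digraph on `v_1, …, v_n` (`n ≥ 4`) with arcs `v_i → v_1`
and `v_2 → v_i` for all `i ∈ {3,…,n}`, together with `v_1 → v_2`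
(here `v_i` is index `i - 1` in `Fin n`), is strong, has diameter `3`, and
satisfies `smc_v(D) = n - 1 = n - diam(D) + 2`. -/
theorem smcv_example_diam_tight (n : ℕ) (hn : 4 ≤ n)
    (A : Fin n → Fin n → Prop)
    (hA : ∀ i j : Fin n, A i j ↔
      (((j : ℕ) = 0 ∧ 2 ≤ (i : ℕ)) ∨ ((i : ℕ) = 1 ∧ 2 ≤ (j : ℕ)) ∨
        ((i : ℕ) = 0 ∧ (j : ℕ) = 1))) :
    SVMC.Strong A ∧ SVMC.diam A = 3 ∧
      SVMC.smcv A = n - 1 ∧ SVMC.smcv A = n - SVMC.diam A + 2 := by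
  set z : Fin n := ⟨0, by omega⟩ with hz
  set o : Fin n := ⟨1, by omega⟩ with ho
  set t : Fin n := ⟨2, by omega⟩ with ht
  set th : Fin n := ⟨3, by omega⟩ with hth
  -- Strong
  have hstrong : SVMC.Strong A := by
    intro u v
    obtain ⟨l, hp, -, -⟩ := SVMCAux.main_path A hA hn u v
    exact ⟨l, hp.1⟩
  -- every distance ≤ 3
  have hdistle : ∀ u v : Fin n, SVMC.dist A u v ≤ 3 := by
    intro u v
    obtain ⟨l, hp, hlen, -⟩ := SVMCAux.main_path A hA hn u v
    exact le_trans (Nat.sInf_le ⟨l, hp.1, rfl⟩) hlen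
  have htth : t ≠ th := by simp [Fin.ext_iff, ht, hth]
  -- dist t th = 3
  have hdist3 : SVMC.dist A t th = 3 := by
    refine le_antisymm (hdistle t th) (le_csInf ?_ ?_)
    · obtain ⟨l, hp, -, -⟩ := SVMCAux.main_path A hA hn t th
      exact ⟨l.length, l, hp.1, rfl⟩
    · rintro m ⟨l, hw, rfl⟩
      obtain ⟨a, b, r, rfl, hr, -, -⟩ :=
        SVMCAux.walk_struct A hA t th (by simp [ht]) (by simp [hth]) htth l hw
      rcases r with _ | ⟨c, r⟩
      · exact absurd rfl hr
      · simp
  -- diam = 3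
  have hdiam : SVMC.diam A = 3 := by
    refine le_antisymm (csSup_le ⟨3, t, th, hdist3⟩ ?_) (le_csSup ⟨3, ?_⟩ ⟨t, th, hdist3⟩)
    · rintro d ⟨u, v, rfl⟩; exact hdistle u v
    · rintro d ⟨u, v, rfl⟩; exact hdistle u v
  -- the good coloring
  set Γ : Fin n → ℕ := fun i => if (i : ℕ) = 0 then 1 else (i : ℕ) with hΓ
  have hΓzo : Γ z = Γ o := by simp [hΓ, hz, ho]
  have hsvmc : SVMC.IsSVMC A Γ := by
    intro u v
    obtain ⟨l, hp, -, hm⟩ := SVMCAux.main_path A hA hn u v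
    exact ⟨l, hp, hm Γ hΓzo⟩
  have hcount : SVMC.colorCount Γ = n - 1 := by
    have hrange : Set.range Γ = Set.Icc 1 (n - 1) := by
      ext m
      simp only [Set.mem_range, Set.mem_Icc]
      constructor
      · rintro ⟨i, rfl⟩
        by_cases h : (i : ℕ) = 0 <;> simp [hΓ, h]
        · omega
        · have := i.isLt; omega
      · rintro ⟨h1, h2⟩
        rcases Nat.lt_or_ge m 2 with hm | hm
        · exact ⟨o, by simp [hΓ, ho]; omega⟩
        · exact ⟨⟨m, by omega⟩, by simp [hΓ]; omega⟩
    rw [SVMC.colorCount, hrange, ← Finset.coe_Icc, Set.ncard_coe_finset, Nat.card_Icc]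
    omega
  -- upper bound on color counts
  have hbound : ∀ k ∈ {k | ∃ Γ' : Fin n → ℕ, SVMC.IsSVMC A Γ' ∧ SVMC.colorCount Γ' = k},
      k ≤ n - 1 := by
    rintro k ⟨Γ', hsv, rfl⟩
    obtain ⟨l, hp, c, hmono⟩ := hsv t th
    obtain ⟨a, b, r, rfl, hr, ha, hb⟩ :=
      SVMCAux.walk_struct A hA t th (by simp [ht]) (by simp [hth]) htth l hp.1
    rcases r with _ | ⟨d, r⟩
    · exact absurd rfl hr
    have haz : a = z := Fin.ext (by simp [hz, ha])
    have hbo : b = o := Fin.ext (by simp [ho, hb])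
    have hmem_a : Γ' a = c := hmono a (by rw [List.dropLast_cons₂]; exact List.mem_cons_self)
    have hmem_b : Γ' b = c := by
      refine hmono b ?_
      rw [List.dropLast_cons₂, List.dropLast_cons₂]
      exact List.mem_cons_of_mem _ List.mem_cons_self
    have hzo : Γ' z = Γ' o := by rw [← haz, ← hbo, hmem_a, hmem_b]
    have himg : Set.range Γ' = Γ' '' {z}ᶜ := by
      apply Set.Subset.antisymm
      · rintro m ⟨i, rfl⟩
        by_cases h : i = z
        · exact ⟨o, by simp [Fin.ext_iff, hz, ho], by rw [← hzo, h]⟩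
        · exact ⟨i, h, rfl⟩
      · rintro m ⟨i, -, rfl⟩; exact ⟨i, rfl⟩
    rw [SVMC.colorCount, himg]
    calc (Γ' '' {z}ᶜ).ncard ≤ ({z}ᶜ : Set (Fin n)).ncard := Set.ncard_image_le
      _ = n - 1 := by
        rw [Set.compl_eq_univ_diff]
        rw [Set.ncard_diff (Set.subset_univ _), Set.ncard_univ, Set.ncard_singleton,
          Nat.card_eq_fintype_card, Fintype.card_fin]
  have hmem : n - 1 ∈ {k | ∃ Γ' : Fin n → ℕ, SVMC.IsSVMC A Γ' ∧ SVMC.colorCount Γ' = k} :=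
    ⟨Γ, hsvmc, hcount⟩
  have hsmcv : SVMC.smcv A = n - 1 :=
    le_antisymm (csSup_le ⟨n - 1, hmem⟩ hbound) (le_csSup ⟨n - 1, hbound⟩ hmem)
  refine ⟨hstrong, hdiam, hsmcv, ?_⟩
  rw [hsmcv, hdiam]; omega
end

section
/- Let D be a strong digraph with an SVMC-coloring Γ, and suppose that for every vertex v of D there exists a vertex x with directed distance d(v,x) ≥ 3. Then the set of vertices whose color class under Γ is non-singular (has at least two vertices) is a total absorbing set of D, i.e., every vertex of D has an out-neighbor lying in a non-singular color class. -/
/-- if every vertex `v` of a strong digraph has some vertex `x`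
with `d(v,x) ≥ 3`, then for an SVMC-coloring the vertices in non-singular
color classes form a total absorbing set. -/
theorem totalAbsorbing_of_svmc {V : Type*} [Fintype V] (A : V → V → Prop)
    (Γ : V → ℕ) (hstrong : SVMC.Strong A) (hΓ : SVMC.IsSVMC A Γ)
    (hd : ∀ v : V, ∃ x : V, 3 ≤ SVMC.dist A v x) :
    SVMC.TotalAbsorbing A {w : V | 2 ≤ {x : V | Γ x = Γ w}.ncard} := by
  intro v
  obtain ⟨x, hx⟩ := hd v
  obtain ⟨l, ⟨hwalk, hnodup⟩, c, hmono⟩ := hΓ v x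
  have hlen : 3 ≤ l.length := le_trans hx (Nat.sInf_le ⟨l, hwalk, rfl⟩)
  match l, hwalk, hnodup, hmono, hlen with
  | a :: b :: d :: rest, hwalk, hnodup, hmono, hlen =>
    refine ⟨a, ?_, (List.chain_cons.mp hwalk.1).1⟩
    have hab : a ≠ b := by
      have := hnodup.of_cons
      simp [List.nodup_cons] at this
      exact this.1.1
    have hma : Γ a = c := hmono a (by simp)
    have hmb : Γ b = c := hmono b (by simp)
    have hsub : {a, b} ⊆ {x : V | Γ x = Γ a} := by
      intro y hy
      rcases hy with rfl | rfl
      · rfl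
      · simp [hmb, hma]
    calc 2 = ({a, b} : Set V).ncard := (Set.ncard_pair hab).symm
      _ ≤ _ := Set.ncard_le_ncard hsub (Set.toFinite _)
end

section
/- Let D be a strong digraph with an SVMC-coloring Γ, and suppose that for every vertex v of D there exists a vertex x with directed distance d(x,v) ≥ 3. Then the set of vertices whose color class is non-singular is a total dominating set of D, i.e., every vertex of D has an in-neighbor lying in a non-singular color class. -/
/-- if every vertex `v` of a strong digraph has some vertex `x`
with `d(x,v) ≥ 3`, then for an SVMC-coloring the vertices in non-singular
color classes form a total dominating set. -/
theorem totalDominating_of_svmc {V : Type*} [Fintype V] (A : V → V → Prop)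
    (Γ : V → ℕ) (hstrong : SVMC.Strong A) (hΓ : SVMC.IsSVMC A Γ)
    (hd : ∀ v : V, ∃ x : V, 3 ≤ SVMC.dist A x v) :
    SVMC.TotalDominating A {w : V | 2 ≤ {x : V | Γ x = Γ w}.ncard} := by
  intro v
  obtain ⟨x, hx⟩ := hd v
  obtain ⟨l, ⟨⟨hchain, hlast⟩, hnodup⟩, c, hc⟩ := hΓ x v
  have hdle : SVMC.dist A x v ≤ l.length := Nat.sInf_le ⟨l, ⟨hchain, hlast⟩, rfl⟩
  have hlen : 3 ≤ l.length := le_trans hx hdle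
  have hne : l ≠ [] := by rintro rfl; simp at hlen
  have hdl : l.dropLast.length = l.length - 1 := List.length_dropLast
  have h2 : l.length - 2 < l.dropLast.length := by omega
  have h3 : l.length - 3 < l.dropLast.length := by omega
  set w := l.dropLast[l.length - 2] with hw
  set w' := l.dropLast[l.length - 3] with hw'
  have hcw : Γ w = c := hc w (List.getElem_mem h2)
  have hcw' : Γ w' = c := hc w' (List.getElem_mem h3)
  have hnd : l.Nodup := hnodup.of_cons
  have hwne : w ≠ w' := by
    simp only [hw, hw', List.getElem_dropLast, ne_eq, hnd.getElem_inj_iff]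
    omega
  have hvlast : l[l.length - 1] = v := by
    have := hlast
    rw [List.getLast_cons hne, List.getLast_eq_getElem] at this
    exact this
  refine ⟨w, ?_, ?_⟩
  · show 2 ≤ {x : V | Γ x = Γ w}.ncard
    have : 1 < {x : V | Γ x = Γ w}.ncard := by
      rw [Set.one_lt_ncard (Set.toFinite _)]
      exact ⟨w, rfl, w', by simp [hcw, hcw'], hwne⟩
    omega
  · have harc := (List.isChain_iff_getElem.mp (List.IsChain.tail hchain)) (l.length - 2) (by simp; omega)
    simp only [List.get_eq_getElem, List.tail_cons] at harc
    have e1 : w = l[l.length - 2] := by rw [hw, List.getElem_dropLast]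
    have e2 : l[l.length - 2 + 1]'(by omega) = v := by
      rw [← hvlast]; congr 1; omega
    rw [e1, ← e2]
    exact harc
end

section
/- Let D be a strong digraph of girth at least 5 with an SVMC-coloring Γ, and let D* be the subdigraph induced by the vertices lying in non-singular color classes. Then D* is strongly connected, and V(D*) is both an absorbing set and a dominating set of D. -/
namespace SVMC

section Helpers

variable {V : Type*}

theorem isWalk_nil_iff {A : V → V → Prop} {u v : V} : IsWalk A u v ([] : List V) ↔ u = v := by
  simp [IsWalk, List.Chain]

theorem isWalk_cons_iff {A : V → V → Prop} {u v a : V} {t : List V} :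
    IsWalk A u v (a :: t) ↔ A u a ∧ IsWalk A a v t := by
  simp only [IsWalk, List.Chain, List.isChain_cons_cons]
  rw [List.getLast_cons (List.cons_ne_nil a t)]
  tauto

theorem IsWalk.append {A : V → V → Prop} {u v w : V} {l m : List V}
    (h1 : IsWalk A u v l) (h2 : IsWalk A v w m) : IsWalk A u w (l ++ m) := by
  induction l generalizing u with
  | nil => rw [isWalk_nil_iff] at h1; subst h1; simpa using h2
  | cons a t ih =>
    rw [isWalk_cons_iff] at h1
    exact isWalk_cons_iff.mpr ⟨h1.1, ih h1.2⟩

theorem IsWalk.concat {A : V → V → Prop} {u v w : V} {l : List V}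
    (h1 : IsWalk A u v l) (h : A v w) : IsWalk A u w (l ++ [w]) :=
  h1.append (isWalk_cons_iff.mpr ⟨h, isWalk_nil_iff.mpr rfl⟩)

theorem walk_last_arc {A : V → V → Prop} {u v : V} {l : List V}
    (hw : IsWalk A u v l) (hl : l ≠ []) : ∃ z ∈ u :: l.dropLast, A z v := by
  induction l generalizing u with
  | nil => exact absurd rfl hl
  | cons a t ih =>
    rw [isWalk_cons_iff] at hw
    cases t with
    | nil =>
      have := isWalk_nil_iff.mp hw.2
      exact ⟨u, by simp, this ▸ hw.1⟩
    | cons b t' =>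
      obtain ⟨z, hz, hzv⟩ := ih hw.2 (by simp)
      refine ⟨z, ?_, hzv⟩
      simp only [List.dropLast_cons₂, List.mem_cons] at hz ⊢
      tauto

theorem mem_dropLast_or_getLast {l : List V} (h : l ≠ []) {x : V} (hx : x ∈ l) :
    x ∈ l.dropLast ∨ x = l.getLast h := by
  conv at hx => rw [← List.dropLast_append_getLast h]
  simp only [List.mem_append, List.mem_singleton] at hx
  tauto

theorem nodup_getLast_not_mem {l : List V} (h : l ≠ []) (hn : l.Nodup) :
    l.getLast h ∉ l.dropLast := by
  conv at hn => rw [← List.dropLast_append_getLast h]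
  rw [List.nodup_append] at hn
  intro hmem
  exact hn.2.2 _ hmem _ (by simp) rfl

theorem exists_ne_mem {d : List V} (hn : d.Nodup) (h2 : 2 ≤ d.length) {x : V} (hx : x ∈ d) :
    ∃ y ∈ d, y ≠ x := by
  match d, hn, h2 with
  | a :: b :: t, hn, _ =>
    rcases eq_or_ne x a with rfl | hxa
    · refine ⟨b, by simp, ?_⟩
      rintro rfl
      simp at hn
    · exact ⟨a, by simp, fun h => hxa h.symm⟩

theorem internal_mem [Fintype V] {Γ : V → ℕ} {l : List V} (hn : l.Nodup)
    (hm : MonoInternal Γ l) (hlen : 2 ≤ l.dropLast.length) {x : V} (hx : x ∈ l.dropLast) :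
    2 ≤ {z | Γ z = Γ x}.ncard := by
  obtain ⟨c, hc⟩ := hm
  have hnd : l.dropLast.Nodup := hn.sublist (List.dropLast_sublist l)
  obtain ⟨y, hy, hyx⟩ := exists_ne_mem hnd hlen hx
  have h1 : (1 : ℕ) < {z | Γ z = Γ x}.ncard := by
    refine (Set.one_lt_ncard (Set.toFinite _)).mpr ⟨y, ?_, x, ?_, hyx⟩
    · show Γ y = Γ x
      rw [hc y hy, hc x hx]
    · show Γ x = Γ x
      rfl
  omega

variable {A : V → V → Prop} {Γ : V → ℕ}

theorem length_ge_of_cycle (hg : 5 ≤ girth A) {u : V} {l : List V} (hc : IsCycle A u l) :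
    5 ≤ l.length :=
  le_trans hg (Nat.sInf_le ⟨u, l, hc, rfl⟩)

theorem no_loop (hg : 5 ≤ girth A) {v : V} (h : A v v) : False := by
  have h5 := length_ge_of_cycle hg (u := v) (l := [v])
    ⟨by simp, isWalk_cons_iff.mpr ⟨h, isWalk_nil_iff.mpr rfl⟩, by simp⟩
  simp at h5

theorem no2 (hg : 5 ≤ girth A) {x y : V} (h1 : A x y) (h2 : A y x) : False := by
  rcases eq_or_ne x y with rfl | hne
  · exact no_loop hg h1
  have h5 := length_ge_of_cycle hg (u := x) (l := [y, x])
    ⟨by simp, isWalk_cons_iff.mpr ⟨h1, isWalk_cons_iff.mpr ⟨h2, isWalk_nil_iff.mpr rfl⟩⟩,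
      by simp [hne]⟩
  simp at h5

theorem no3 (hg : 5 ≤ girth A) {a b c : V} (h1 : A a b) (h2 : A b c) (h3 : A c a) : False := by
  have hab : a ≠ b := by rintro rfl; exact no_loop hg h1
  have hbc : b ≠ c := by rintro rfl; exact no_loop hg h2
  have hac : a ≠ c := by rintro rfl; exact no2 hg h1 h2
  have h5 := length_ge_of_cycle hg (u := a) (l := [b, c, a])
    ⟨by simp, isWalk_cons_iff.mpr ⟨h1, isWalk_cons_iff.mpr ⟨h2,
      isWalk_cons_iff.mpr ⟨h3, isWalk_nil_iff.mpr rfl⟩⟩⟩, by simp [hab, hbc, hac]⟩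
  simp at h5

theorem no4 (hg : 5 ≤ girth A) {a b c d : V} (h1 : A a b) (h2 : A b c) (h3 : A c d)
    (h4 : A d a) : False := by
  have hab : a ≠ b := by rintro rfl; exact no_loop hg h1
  have hbc : b ≠ c := by rintro rfl; exact no_loop hg h2
  have hcd : c ≠ d := by rintro rfl; exact no_loop hg h3
  have hda : d ≠ a := by rintro rfl; exact no_loop hg h4
  have hac : a ≠ c := by rintro rfl; exact no2 hg h1 h2
  have hbd : b ≠ d := by rintro rfl; exact no2 hg h2 h3
  have h5 := length_ge_of_cycle hg (u := a) (l := [b, c, d, a])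
    ⟨by simp, isWalk_cons_iff.mpr ⟨h1, isWalk_cons_iff.mpr ⟨h2, isWalk_cons_iff.mpr ⟨h3,
      isWalk_cons_iff.mpr ⟨h4, isWalk_nil_iff.mpr rfl⟩⟩⟩⟩,
      by simp [hab, hbc, hcd, hda.symm, hac, hbd]⟩
  simp at h5

theorem exists_two (hg : 5 ≤ girth A) : ∃ a b : V, a ≠ b := by
  have hne : {n | ∃ u l, IsCycle A u l ∧ l.length = n}.Nonempty := by
    by_contra h
    rw [Set.not_nonempty_iff_eq_empty] at h
    rw [girth, h, Nat.sInf_empty] at hg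
    omega
  obtain ⟨u, l, hc, hlen⟩ := Nat.sInf_mem hne
  have h5 : 5 ≤ l.length := length_ge_of_cycle hg hc
  have hdl : l.dropLast ≠ [] := by
    have := List.length_dropLast (xs := l)
    intro h
    rw [h] at this
    simp at this
    omega
  obtain ⟨a, ha⟩ := List.exists_mem_of_ne_nil _ hdl
  refine ⟨u, a, ?_⟩
  rintro rfl
  exact (List.nodup_cons.mp hc.2.2).1 ha

theorem exists_ne (hg : 5 ≤ girth A) (v : V) : ∃ t : V, t ≠ v := by
  obtain ⟨a, b, hab⟩ := exists_two (A := A) hg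
  rcases eq_or_ne a v with rfl | h
  · exact ⟨b, fun hh => hab hh.symm⟩
  · exact ⟨a, h⟩

theorem exists_out (hg : 5 ≤ girth A) (hstrong : Strong A) (v : V) : ∃ w, A v w := by
  obtain ⟨t, ht⟩ := exists_ne (A := A) hg v
  obtain ⟨l, hw⟩ := hstrong v t
  cases l with
  | nil => exact absurd (isWalk_nil_iff.mp hw) (Ne.symm ht)
  | cons c t' => exact ⟨c, (isWalk_cons_iff.mp hw).1⟩

theorem exists_in (hg : 5 ≤ girth A) (hstrong : Strong A) (v : V) : ∃ z, A z v := by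
  obtain ⟨t, ht⟩ := exists_ne (A := A) hg v
  obtain ⟨l, hw⟩ := hstrong t v
  have hl : l ≠ [] := by
    rintro rfl
    exact ht (isWalk_nil_iff.mp hw)
  obtain ⟨z, _, hz⟩ := walk_last_arc hw hl
  exact ⟨z, hz⟩

theorem cycle_of_path_arc (hg : 5 ≤ girth A) {u v : V} {l : List V}
    (hp : IsPath A u v l) (hl : l ≠ []) (h : A v u) : 5 ≤ l.length + 1 := by
  have hc : IsCycle A u (l ++ [u]) := by
    refine ⟨by simp, hp.1.concat h, ?_⟩
    rw [List.dropLast_concat]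
    exact hp.2
  have := length_ge_of_cycle hg hc
  simpa using this

/-- key lemma: the SVMC path from `v` back to an in-neighbour `z` has length ≥ 4. -/
theorem rev_path (hg : 5 ≤ girth A) (hΓ : IsSVMC A Γ) {v z : V} (hzv : A z v) :
    ∃ l, IsPath A v z l ∧ MonoInternal Γ l ∧ 4 ≤ l.length := by
  obtain ⟨l, hp, hm⟩ := hΓ v z
  have hl : l ≠ [] := by
    rintro rfl
    exact no_loop hg ((isWalk_nil_iff.mp hp.1) ▸ hzv)
  have := cycle_of_path_arc hg hp hl hzv
  exact ⟨l, hp, hm, by omega⟩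

/-- dual key lemma: the SVMC path from an out-neighbour `w` back to `v` has length ≥ 4. -/
theorem fwd_path (hg : 5 ≤ girth A) (hΓ : IsSVMC A Γ) {v w : V} (hvw : A v w) :
    ∃ l, IsPath A w v l ∧ MonoInternal Γ l ∧ 4 ≤ l.length := by
  obtain ⟨l, hp, hm⟩ := hΓ w v
  have hl : l ≠ [] := by
    rintro rfl
    exact no_loop hg ((isWalk_nil_iff.mp hp.1).symm ▸ hvw)
  have hlast : (w :: l).getLast (List.cons_ne_nil w l) = v := hp.1.2
  have hc : IsCycle A v (w :: l) := by
    refine ⟨by simp, isWalk_cons_iff.mpr ⟨hvw, hp.1⟩, ?_⟩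
    rw [List.dropLast_cons_of_ne_nil hl, List.nodup_cons]
    constructor
    · intro hmem
      have hv : v ∉ (w :: l).dropLast := hlast ▸ nodup_getLast_not_mem _ hp.2
      rw [List.dropLast_cons_of_ne_nil hl] at hv
      exact hv hmem
    · have : (w :: l).dropLast.Nodup := hp.2.sublist (List.dropLast_sublist _)
      rwa [List.dropLast_cons_of_ne_nil hl] at this
  have := length_ge_of_cycle hg hc
  simp only [List.length_cons] at this
  exact ⟨l, hp, hm, by omega⟩

end Helpers

end SVMC

/-- in a strong digraph of girth at least 5 with an SVMC-coloring,
the subdigraph `D*` induced by the vertices in non-singular color classes is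
strongly connected, and `V(D*)` is absorbing and dominating. -/
theorem strong_absorbing_dominating_of_girth_ge_five {V : Type*} [Fintype V]
    (A : V → V → Prop) (Γ : V → ℕ)
    (hstrong : SVMC.Strong A) (hΓ : SVMC.IsSVMC A Γ) (hg : 5 ≤ SVMC.girth A) :
    SVMC.StrongOn A {w : V | 2 ≤ {x : V | Γ x = Γ w}.ncard} ∧
      SVMC.Absorbing A {w : V | 2 ≤ {x : V | Γ x = Γ w}.ncard} ∧
      SVMC.Dominating A {w : V | 2 ≤ {x : V | Γ x = Γ w}.ncard} := by
  set S : Set V := {w : V | 2 ≤ {x : V | Γ x = Γ w}.ncard} with hSdef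
  have habs : ∀ v : V, ∃ w ∈ S, A v w := by
    intro v
    obtain ⟨z, hz⟩ := SVMC.exists_in hg hstrong v
    obtain ⟨l, hp, hm, hlen⟩ := SVMC.rev_path hg hΓ hz
    match l, hp, hm, hlen with
    | a :: t, hp, hm, hlen =>
      have ht : t ≠ [] := by rintro rfl; simp at hlen
      have ha : a ∈ (a :: t).dropLast := by
        rw [List.dropLast_cons_of_ne_nil ht]; exact List.mem_cons_self
      refine ⟨a, ?_, (SVMC.isWalk_cons_iff.mp hp.1).1⟩
      exact SVMC.internal_mem (List.nodup_cons.mp hp.2).2 hm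
        (by simp only [List.length_dropLast, List.length_cons] at *; omega) ha
  have hdom : ∀ v : V, ∃ w ∈ S, A w v := by
    intro v
    obtain ⟨w, hw⟩ := SVMC.exists_out hg hstrong v
    obtain ⟨l, hp, hm, hlen⟩ := SVMC.fwd_path hg hΓ hw
    have hl : l ≠ [] := by rintro rfl; simp at hlen
    obtain ⟨z, hz, hzv⟩ := SVMC.walk_last_arc hp.1 hl
    rcases List.mem_cons.mp hz with rfl | hz'
    · exact (SVMC.no2 hg hw hzv).elim
    · refine ⟨z, ?_, hzv⟩
      exact SVMC.internal_mem (List.nodup_cons.mp hp.2).2 hm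
        (by simp only [List.length_dropLast] at *; omega) hz'
  have hrefl : ∀ u ∈ S, ∃ l, SVMC.IsWalkIn A S u u l := fun u hu =>
    ⟨[], ⟨SVMC.isWalk_nil_iff.mpr rfl, by intro x hx; simp at hx; subst hx; exact hu⟩⟩
  have harc : ∀ u v : V, u ∈ S → v ∈ S → A u v → ∃ l, SVMC.IsWalkIn A S u v l := by
    intro u v hu hv h
    refine ⟨[v], SVMC.isWalk_cons_iff.mpr ⟨h, SVMC.isWalk_nil_iff.mpr rfl⟩, ?_⟩
    intro x hx
    simp only [List.mem_cons, List.mem_singleton, List.not_mem_nil, or_false] at hx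
    rcases hx with rfl | rfl
    exacts [hu, hv]
  have htrans : ∀ u v w : V, (∃ l, SVMC.IsWalkIn A S u v l) →
      (∃ m, SVMC.IsWalkIn A S v w m) → ∃ l, SVMC.IsWalkIn A S u w l := by
    rintro u v w ⟨l, hl, hlS⟩ ⟨m, hm, hmS⟩
    refine ⟨l ++ m, hl.append hm, ?_⟩
    intro x hx
    rcases List.mem_cons.mp hx with rfl | hx
    · exact hlS _ List.mem_cons_self
    · rcases List.mem_append.mp hx with h | h
      · exact hlS _ (List.mem_cons_of_mem _ h)
      · exact hmS _ (List.mem_cons_of_mem _ h)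
  have hinS : ∀ (u v : V), u ∈ S → v ∈ S → ∀ (l : List V), SVMC.IsPath A u v l →
      SVMC.MonoInternal Γ l → 2 ≤ l.dropLast.length → SVMC.IsWalkIn A S u v l := by
    intro u v hu hv l hp hm h2
    refine ⟨hp.1, ?_⟩
    intro x hx
    rcases List.mem_cons.mp hx with rfl | hx
    · exact hu
    · have hlne : l ≠ [] := by rintro rfl; simp at hx
      rcases SVMC.mem_dropLast_or_getLast hlne hx with h | h
      · exact SVMC.internal_mem (List.nodup_cons.mp hp.2).2 hm h2 h
      · have hgl : l.getLast hlne = v := by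
          have h' := hp.1.2
          rwa [List.getLast_cons hlne] at h'
        rw [h, hgl]; exact hv
  have hkeyrev : ∀ s t : V, s ∈ S → t ∈ S → A s t → ∃ l, SVMC.IsWalkIn A S t s l := by
    intro s t hs ht h
    obtain ⟨l, hp, hm, hlen⟩ := SVMC.rev_path hg hΓ h
    exact ⟨l, hinS t s ht hs l hp hm
      (by simp only [List.length_dropLast]; omega)⟩
  have hrev : ∀ (l : List V) (u v : V), SVMC.IsWalkIn A S u v l →
      ∃ m, SVMC.IsWalkIn A S v u m := by
    intro l
    induction l with
    | nil =>
      intro u v h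
      have := SVMC.isWalk_nil_iff.mp h.1
      subst this
      exact hrefl u (h.2 u (by simp))
    | cons a t ih =>
      intro u v h
      have hu : u ∈ S := h.2 u List.mem_cons_self
      have ha : a ∈ S := h.2 a (by simp)
      obtain ⟨h1, hwt⟩ := SVMC.isWalk_cons_iff.mp h.1
      have htS : SVMC.IsWalkIn A S a v t :=
        ⟨hwt, fun x hx => h.2 x (List.mem_cons_of_mem _ hx)⟩
      exact htrans v a u (ih a v htS) (hkeyrev u a hu ha h1)
  have hmain : ∀ u ∈ S, ∀ v ∈ S, ∃ l, SVMC.IsWalkIn A S u v l := by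
    intro u hu v hv
    obtain ⟨l, hp, hm⟩ := hΓ u v
    match l, hp, hm with
    | [], hp, hm =>
      have : u = v := SVMC.isWalk_nil_iff.mp hp.1
      subst this
      exact hrefl u hu
    | [a], hp, hm =>
      obtain ⟨h1, h2⟩ := SVMC.isWalk_cons_iff.mp hp.1
      have : a = v := SVMC.isWalk_nil_iff.mp h2
      subst this
      exact harc u a hu hv h1
    | [a, b], hp, hm =>
      obtain ⟨h1, h2'⟩ := SVMC.isWalk_cons_iff.mp hp.1
      obtain ⟨h2, h3⟩ := SVMC.isWalk_cons_iff.mp h2'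
      have hbv : b = v := SVMC.isWalk_nil_iff.mp h3
      subst hbv
      by_cases haS : a ∈ S
      · exact htrans u a b (harc u a hu haS h1) (harc a b haS hv h2)
      · obtain ⟨m, hq, hqm⟩ := hΓ b u
        have hub : u ≠ b := by
          have hnd := hp.2
          simp only [List.nodup_cons, List.mem_cons, List.mem_singleton,
            List.not_mem_nil] at hnd
          tauto
        match m, hq, hqm with
        | [], hq, _ => exact absurd (SVMC.isWalk_nil_iff.mp hq.1).symm hub
        | [c], hq, _ =>
          obtain ⟨g1, g2⟩ := SVMC.isWalk_cons_iff.mp hq.1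
          have : c = u := SVMC.isWalk_nil_iff.mp g2
          subst this
          exact (SVMC.no3 hg h1 h2 g1).elim
        | [c, d], hq, _ =>
          obtain ⟨g1, g2'⟩ := SVMC.isWalk_cons_iff.mp hq.1
          obtain ⟨g2, g3⟩ := SVMC.isWalk_cons_iff.mp g2'
          have : d = u := SVMC.isWalk_nil_iff.mp g3
          subst this
          exact (SVMC.no4 hg h1 h2 g1 g2).elim
        | c :: c' :: c'' :: t, hq, hqm =>
          exact hrev _ b u (hinS b u hv hu _ hq hqm
            (by simp only [List.length_dropLast, List.length_cons]; omega))
    | a :: a' :: a'' :: t, hp, hm =>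
      exact ⟨_, hinS u v hu hv _ hp hm
        (by simp only [List.length_dropLast, List.length_cons]; omega)⟩
  exact ⟨hmain, fun v _ => habs v, fun v _ => hdom v⟩
end

section
/- Let D be a strong digraph not isomorphic to the directed 3-cycle, let H = L(D) be its line digraph, let Γ be an SVMC-coloring of H, and let Γ' be the arc coloring of D assigning to each arc e the color Γ(e). If (u,v) is an ordered pair of vertices of D that is not a bad pair, then there exists a directed (v,u)-path in D all of whose arcs have the same color under Γ'. -/
open SVMC

lemma suffix_zip_subset {V : Type*} {s m : List V} (h : s <:+ m) :
    ∀ p ∈ s.zip s.tail, p ∈ m.zip m.tail := by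
  induction m with
  | nil => rw [List.suffix_nil.mp h]; simp
  | cons a m ih =>
    rcases List.suffix_cons_iff.mp h with h | h
    · subst h; exact fun p hp => hp
    · intro p hp
      have hm := ih h p hp
      cases m with
      | nil => simp at hm
      | cons b m' => simpa using List.mem_cons_of_mem (a, b) (by simpa using hm)

lemma mem_of_pairs_subset {V : Type*} {a b : V} {p m : List V}
    (h : ∀ q ∈ (a::p).zip p, q ∈ (b::m).zip m) : ∀ x ∈ p, x ∈ m := by
  intro x hx
  have h1 : List.map Prod.snd ((a::p).zip p) = p := List.map_snd_zip (by simp)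
  have h2 : List.map Prod.snd ((b::m).zip m) = m := List.map_snd_zip (by simp)
  rw [← h1] at hx
  obtain ⟨q, hq, rfl⟩ := List.mem_map.mp hx
  rw [← h2]; exact List.mem_map_of_mem (h q hq)

lemma getLast_suffix {V : Type*} {l s : List V} (h : s <:+ l) (hs : s ≠ []) (hl : l ≠ []) :
    l.getLast hl = s.getLast hs := by
  obtain ⟨p, rfl⟩ := h
  rw [List.getLast_append]
  simp [hs]

lemma walk_to_path {V : Type*} (A : V → V → Prop) :
    ∀ (n : ℕ) (l : List V), l.length ≤ n → ∀ u t, IsWalk A u t l →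
      ∃ l', IsPath A u t l' ∧ ∀ p ∈ (u::l').zip l', p ∈ (u::l).zip l := by
  intro n
  induction n with
  | zero =>
    intro l hl u t hw
    rw [List.length_eq_zero_iff.mp (Nat.le_zero.mp hl)] at hw ⊢
    exact ⟨[], ⟨hw, by simp⟩, by simp⟩
  | succ n ih =>
    intro l hl u t hw
    by_cases hu : u ∈ l
    · obtain ⟨l1, l2, rfl⟩ := List.append_of_mem hu
      have hsuf : (u :: l2) <:+ (u :: (l1 ++ u :: l2)) := by
        refine ⟨u :: l1, by simp⟩
      have hch' : List.Chain' A (u :: (l1 ++ u :: l2)) := hw.1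
      have hch : List.Chain A u l2 := List.IsChain.suffix hch' hsuf
      have hlast : (u :: l2).getLast (by simp) = t :=
        (getLast_suffix hsuf (by simp) (List.cons_ne_nil _ _)).symm.trans hw.2
      have hlen : l2.length ≤ n := by
        simp only [List.length_append, List.length_cons] at hl; omega
      obtain ⟨l', hp, hsub⟩ := ih l2 hlen u t ⟨hch, hlast⟩
      exact ⟨l', hp, fun p hp' => suffix_zip_subset (by exact hsuf.trans (by rfl)) p
        (by simpa using hsub p hp')⟩
    · cases l with
      | nil =>
        have : t = u := by simpa using hw.2.symm
        subst this
        exact ⟨[], ⟨hw, by simp⟩, by simp⟩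
      | cons w l' =>
        have hch : List.Chain A w l' := (List.chain_cons.mp hw.1).2
        have hAuw : A u w := (List.chain_cons.mp hw.1).1
        have hlast : (w :: l').getLast (by simp) = t := by
          have := hw.2
          rwa [List.getLast_cons (by simp)] at this
        obtain ⟨p, hp, hsub⟩ := ih l' (by simpa using hl) w t ⟨hch, hlast⟩
        have hpl : ∀ x ∈ p, x ∈ l' := mem_of_pairs_subset hsub
        refine ⟨w :: p, ⟨⟨List.chain_cons.mpr ⟨hAuw, hp.1.1⟩, ?_⟩, ?_⟩, ?_⟩
        · rw [List.getLast_cons (by simp)]; exact hp.1.2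
        · refine List.nodup_cons.mpr ⟨?_, hp.2⟩
          intro hmem
          rcases List.mem_cons.mp hmem with h | h
          · exact hu (h ▸ List.mem_cons_self)
          · exact hu (List.mem_cons_of_mem w (hpl _ h))
        · intro q hq
          rw [List.zip_cons_cons] at hq ⊢
          rcases List.mem_cons.mp hq with h | h
          · exact h ▸ List.mem_cons_self
          · exact List.mem_cons_of_mem _ (hsub q h)

lemma arclist_walk {V : Type*} {A : V → V → Prop} :
    ∀ (E : List (SVMC.Arc A)) (e : SVMC.Arc A), List.Chain' (SVMC.lineAdj A) (e :: E) →
      SVMC.IsWalk A e.1.1 (((e::E).getLast (List.cons_ne_nil _ _)).1.2)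
        ((e::E).map (fun f => f.1.2)) ∧
      ∀ p ∈ (e.1.1 :: (e::E).map (fun f => f.1.2)).zip ((e::E).map (fun f => f.1.2)),
        ∃ f ∈ e :: E, p = f.1 := by
  intro E
  induction E with
  | nil =>
    intro e _
    refine ⟨⟨List.chain_cons.mpr ⟨e.2, List.Chain.nil⟩ , by simp⟩, ?_⟩
    intro p hp
    simp only [List.map_cons, List.map_nil, List.zip_cons_cons, List.zip_nil_right,
      List.mem_singleton] at hp
    exact ⟨e, List.mem_singleton.mpr rfl, by simp [hp]⟩
  | cons f E' ih =>
    intro e hch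
    have h1 : SVMC.lineAdj A e f := (List.chain_cons.mp hch).1
    have h2 : List.Chain' (SVMC.lineAdj A) (f :: E') := (List.chain_cons.mp hch).2
    obtain ⟨⟨ihc, ihl⟩, ihp⟩ := ih f h2
    have hef : e.1.2 = f.1.1 := h1
    have hmapeq : (e::f::E').map (fun f => f.1.2)
        = e.1.2 :: (f::E').map (fun f => f.1.2) := rfl
    constructor
    · constructor
      · rw [hmapeq]
        refine List.chain_cons.mpr ⟨e.2, ?_⟩
        rw [hef]; exact ihc
      · have e1 : ((e::f::E').map (fun f => f.1.2)).getLast (by simp)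
            = ((f::E').map (fun f => f.1.2)).getLast (by simp) :=
          getLast_suffix ⟨[e.1.2], by simp [hmapeq]⟩ (by simp) (by simp)
        have e2 : (f.1.1 :: (f::E').map (fun f => f.1.2)).getLast (List.cons_ne_nil _ _)
            = ((f::E').map (fun f => f.1.2)).getLast (by simp) :=
          getLast_suffix ⟨[f.1.1], rfl⟩ (by simp) (by simp)
        have e3 : ((e::f::E').getLast (List.cons_ne_nil _ _))
            = ((f::E').getLast (List.cons_ne_nil _ _)) :=
          getLast_suffix ⟨[e], rfl⟩ (by simp) (by simp)
        rw [e3]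
        exact e1.trans (e2.symm.trans ihl)
    · intro p hp
      rw [hmapeq, List.zip_cons_cons] at hp
      rcases List.mem_cons.mp hp with h | h
      · exact ⟨e, List.mem_cons_self, by simp [h]⟩
      · have hmem : p ∈ (f.1.1 :: (f :: E').map (fun f => f.1.2)).zip
            ((f :: E').map (fun f => f.1.2)) := by
          rw [← hef]; exact h
        obtain ⟨g, hg, hpg⟩ := ihp p hmem
        exact ⟨g, List.mem_cons_of_mem _ hg, hpg⟩

lemma walk_last_arc {V : Type*} {A : V → V → Prop} :
    ∀ (l : List V) (u t : V), SVMC.IsWalk A u t l → l ≠ [] → ∃ w, A w t := by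
  intro l
  induction l with
  | nil => intro u t _ h; exact absurd rfl h
  | cons x l' ih =>
    intro u t hw _
    cases l' with
    | nil =>
      have : x = t := by simpa using hw.2
      exact ⟨u, this ▸ (List.chain_cons.mp hw.1).1⟩
    | cons y l'' =>
      refine ih x t ⟨(List.chain_cons.mp hw.1).2, ?_⟩ (by simp)
      have := hw.2
      rwa [List.getLast_cons (by simp)] at this
/-- let `D` be a strong digraph not isomorphic to the directed
3-cycle, `Γ` an SVMC-coloring of the line digraph `L(D)`, and color each arc
`e` of `D` by `Γ e`.  If `(u,v)` is not a bad pair, then there is a directed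
`(v,u)`-path in `D` all of whose arcs have the same color. -/
theorem exists_mono_path_of_not_badPair {V : Type*} [Fintype V]
    (A : V → V → Prop) (u v : V)
    (hstrong : SVMC.Strong A) (hC3 : ¬ SVMC.IsoC3 A)
    (Γ : SVMC.Arc A → ℕ) (hΓ : SVMC.IsSVMC (SVMC.lineAdj A) Γ)
    (hnotbad : ¬ SVMC.BadPair A u v) :
    ∃ l : List V, SVMC.IsPath A v u l ∧
      ∃ c : ℕ, ∀ e : SVMC.Arc A, e.1 ∈ (v :: l).zip l → Γ e = c := by
  by_cases huv : u = v
  · exact ⟨[], ⟨⟨List.Chain.nil, by simp [huv]⟩, by simp⟩, 0, by simp⟩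
  -- u has an out-neighbor and v an in-neighbor
  obtain ⟨lw, hlw⟩ := hstrong u v
  have hlwne : lw ≠ [] := by
    rintro rfl; exact huv (by simpa using hlw.2)
  have hout : ∃ x, A u x := by
    cases lw with
    | nil => exact absurd rfl hlwne
    | cons a _ => exact ⟨a, (List.chain_cons.mp hlw.1).1⟩
  have hin : ∃ w, A w v := walk_last_arc lw u v hlw hlwne
  -- choose arcs e0 into v and f0 out of u with e0 ≠ f0
  have hchoice : ∃ (e0 f0 : SVMC.Arc A), e0.1.2 = v ∧ f0.1.1 = u ∧ e0 ≠ f0 := by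
    have hbad := hnotbad
    rw [SVMC.BadPair, not_and_or] at hbad
    rcases hbad with hb | hb
    · have : ∃ x, A u x ∧ x ≠ v := by
        by_contra hc
        push_neg at hc
        apply hb
        ext w
        simp only [Set.mem_setOf_eq, Set.mem_singleton_iff]
        constructor
        · intro hw; by_contra hne; exact hne (hc w hw)
        · rintro rfl
          obtain ⟨x, hx⟩ := hout
          rwa [← hc x hx]
      obtain ⟨x, hx, hxv⟩ := this
      obtain ⟨w, hw⟩ := hin
      exact ⟨⟨(w, v), hw⟩, ⟨(u, x), hx⟩, rfl, rfl, fun h => hxv (congrArg (fun e => e.1.2) h).symm⟩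
    · have : ∃ w, A w v ∧ w ≠ u := by
        by_contra hc
        push_neg at hc
        apply hb
        ext w
        simp only [Set.mem_setOf_eq, Set.mem_singleton_iff]
        constructor
        · intro hw; by_contra hne; exact hne (hc w hw)
        · rintro rfl
          obtain ⟨x, hx⟩ := hin
          rwa [← hc x hx]
      obtain ⟨w, hw, hwu⟩ := this
      obtain ⟨x, hx⟩ := hout
      exact ⟨⟨(w, v), hw⟩, ⟨(u, x), hx⟩, rfl, rfl, fun h => hwu (congrArg (fun e => e.1.1) h)⟩
  obtain ⟨e0, f0, he0, hf0, hne⟩ := hchoice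
  obtain ⟨L, ⟨⟨hLch, hLlast⟩, _⟩, c, hcol⟩ := hΓ e0 f0
  have hLne : L ≠ [] := by
    rintro rfl; exact hne (by simpa using hLlast)
  -- L = E ++ [f0]
  have hgl : L.getLast hLne = f0 := by
    have := hLlast
    rwa [List.getLast_cons hLne] at this
  obtain ⟨E, hLsplit⟩ : ∃ E, L = E ++ [f0] :=
    ⟨L.dropLast, by conv_lhs => rw [← List.dropLast_append_getLast hLne, hgl]⟩
  have hcolE : ∀ x ∈ E, Γ x = c := by
    intro x hx
    apply hcol
    rw [hLsplit, List.dropLast_concat]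
    exact hx
  have hEne : E ≠ [] := by
    rintro rfl
    rw [List.nil_append] at hLsplit
    rw [hLsplit] at hLch
    have : SVMC.lineAdj A e0 f0 := (List.chain_cons.mp hLch).1
    exact huv (by rw [← hf0, ← this, he0])
  have hch' : List.Chain' (SVMC.lineAdj A) ((e0 :: E) ++ [f0]) := by
    have hc0 : List.Chain' (SVMC.lineAdj A) (e0 :: L) := hLch
    rwa [hLsplit] at hc0
  replace hch' := List.isChain_append.mp hch'
  obtain ⟨hchE0, _, hlink⟩ := hch'
  have hchE : List.Chain (SVMC.lineAdj A) e0 E := hchE0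
  have hlast : (E.getLast hEne).1.2 = u := by
    have h5 := hlink ((e0 :: E).getLast (by simp)) (by simp [List.getLast?_eq_getLast])
      f0 (by simp)
    have h6 : (e0 :: E).getLast (by simp) = E.getLast hEne :=
      getLast_suffix ⟨[e0], rfl⟩ hEne (by simp)
    rw [h6] at h5
    rw [h5, hf0]
  cases E with
  | nil => exact absurd rfl hEne
  | cons h E'' =>
    have hhead : h.1.1 = v := by
      have : SVMC.lineAdj A e0 h := (List.chain_cons.mp hchE).1
      rw [← this, he0]
    have hchE' : List.Chain' (SVMC.lineAdj A) (h :: E'') := (List.chain_cons.mp hchE).2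
    obtain ⟨hwalk, hpairs⟩ := arclist_walk (A := A) E'' h hchE'
    rw [hhead] at hwalk
    rw [hlast] at hwalk
    set m := (h :: E'').map (fun f => f.1.2) with hm
    obtain ⟨l', hpath, hsub⟩ := walk_to_path A m.length m le_rfl v u hwalk
    refine ⟨l', hpath, c, ?_⟩
    intro e hemem
    obtain ⟨g, hg, hpg⟩ := hpairs e.1 (by
      have := hsub e.1 hemem
      rw [hhead]
      exact this)
    have : e = g := Subtype.ext hpg
    rw [this]
    exact hcolE g hg
end
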